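/- Let $G$ be a group, $\mathcal{A}$ a commutative unital ring, $\mathcal{F}$ the ring of all functions $G \to \mathcal{A}$ with the $G$-action $\beta_x(f)(t) = f(x^{-1}t)$, and $\widetilde{w} : G^n \to \mathcal{U}(\mathcal{A})$ any function. Define $u : G^n \to \mathcal{U}(\mathcal{F})$ by $u(x_1,\dots,x_n)(t) = \widetilde{w}(t^{-1},x_1,\dots,x_{n-1})^{(-1)^n} \widetilde{w}(t^{-1}x_1, x_2,\dots,x_n) \prod_{i=1}^{n-1} \widetilde{w}(t^{-1},x_1,\dots,x_i x_{i+1},\dots,x_n)^{(-1)^i}$. Then $u$ is a (classical) $n$-cocycle of $G$ with values in the $G$-module $\mathcal{U}(\mathcal{F})$, i.e., $\beta_{x_1}(u(x_2,\dots,x_{n+1})) \prod_{i=1}^n u(x_1,\dots,x_i x_{i+1},\dots,x_{n+1})^{(-1)^i} u(x_1,\dots,x_n)^{(-1)^{n+1}} = 1_{\mathcal{F}}$ for all $x_1,\dots,x_{n+1} \in G$. -/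

import Mathlib

set_option linter.unusedSectionVars false

/-- The tuple obtained from `(x₁,…,x_{n+1})` by multiplying the entries in positions
`i, i+1` (0-indexed). -/
def dface {G : Type*} [Group G] {n : ℕ} (i : Fin n) (x : Fin (n + 1) → G) : Fin n → G :=
  fun j => if (j : ℕ) < (i : ℕ) then x j.castSucc
    else if j = i then x i.castSucc * x i.succ
    else x j.succ

section Aux

variable {G A : Type*} [Group G] [CommRing A]

/-- The `k`-th face map of the bar construction, with `k : ℕ` (intended `k ≤ m + 1`):
`k = 0` drops the first entry, `k = m + 1` drops the last, and otherwise entries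
`k - 1` and `k` are multiplied. -/
def fc (m k : ℕ) (y : Fin (m + 1) → G) : Fin m → G := fun j =>
  if (j : ℕ) + 1 < k then y j.castSucc
  else if (j : ℕ) + 1 = k then y j.castSucc * y j.succ
  else y j.succ

/-- The bar-type coboundary (with trivial coefficients). -/
def cb (m : ℕ) (w : (Fin m → G) → Aˣ) : (Fin (m + 1) → G) → Aˣ :=
  fun y => ∏ k ∈ Finset.range (m + 2), (w (fc m k y)) ^ ((-1 : ℤ) ^ k)

lemma fc_fc (m a b : ℕ) (hab : a ≤ b) (z : Fin (m + 2) → G) :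
    fc m a (fc (m + 1) (b + 1) z) = fc m b (fc (m + 1) a z) := by
  funext j
  have hj := j.isLt
  simp only [fc, Fin.coe_castSucc, Fin.val_succ]
  split_ifs <;>
    first
      | rfl
      | omega
      | exact (mul_assoc _ _ _)
      | exact (mul_assoc _ _ _).symm

/-- `δ ∘ δ = 1`. -/
lemma cb_cb (m : ℕ) (w : (Fin m → G) → Aˣ) (z : Fin (m + 2) → G) :
    cb (m + 1) (cb m w) z = 1 := by
  unfold cb
  have step : ∀ k ∈ Finset.range (m + 3),
      (∏ i ∈ Finset.range (m + 2), (w (fc m i (fc (m + 1) k z))) ^ ((-1 : ℤ) ^ i)) ^ ((-1 : ℤ) ^ k)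
      = ∏ i ∈ Finset.range (m + 2), (w (fc m i (fc (m + 1) k z))) ^ ((-1 : ℤ) ^ (k + i)) := by
    intro k _
    rw [← Finset.prod_zpow]
    refine Finset.prod_congr rfl fun i _ => ?_
    rw [← zpow_mul, ← pow_add, Nat.add_comm i k]
  rw [Finset.prod_congr rfl step, ← Finset.prod_product']
  refine Finset.prod_involution
    (g := fun p _ => if p.2 < p.1 then (p.2, p.1 - 1) else (p.2 + 1, p.1)) ?_ ?_ ?_ ?_
  · rintro ⟨k, i⟩ hp
    simp only [Finset.mem_product, Finset.mem_range] at hp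
    by_cases h : i < k
    · simp only [h, if_pos]
      have hk : k = (k - 1) + 1 := by omega
      have harg : fc m i (fc (m + 1) k z) = fc m (k - 1) (fc (m + 1) i z) := by
        have := fc_fc m i (k - 1) (by omega) z
        rwa [← hk] at this
      simp only [harg]
      rw [← zpow_add]
      have : (-1 : ℤ) ^ (k + i) + (-1 : ℤ) ^ (i + (k - 1)) = 0 := by
        have h2 : k + i = (i + (k - 1)) + 1 := by omega
        rw [h2, pow_succ]; ring
      rw [this, zpow_zero]
    · simp only [h, if_neg, if_false]
      have harg : fc m k (fc (m + 1) (i + 1) z) = fc m i (fc (m + 1) k z) :=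
        fc_fc m k i (by omega) z
      simp only [harg]
      rw [← zpow_add]
      have : (-1 : ℤ) ^ (k + i) + (-1 : ℤ) ^ (i + 1 + k) = 0 := by
        have h2 : i + 1 + k = (k + i) + 1 := by omega
        rw [h2, pow_succ]; ring
      rw [this, zpow_zero]
  · rintro ⟨k, i⟩ hp _
    by_cases h : i < k <;> simp [h, Prod.ext_iff] <;> omega
  · rintro ⟨k, i⟩ hp
    simp only [Finset.mem_product, Finset.mem_range] at hp ⊢
    by_cases h : i < k <;> simp [h] <;> omega
  · rintro ⟨k, i⟩ hp
    by_cases h : i < k <;> simp [h]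
    · have : ¬ (k - 1 < i) := by omega
      simp [this]; omega

lemma dface_eq_fc {m : ℕ} (i : Fin m) (y : Fin (m + 1) → G) :
    dface i y = fc m ((i : ℕ) + 1) y := by
  funext j
  by_cases hji : j = i
  · subst hji
    simp [dface, fc]
  · have hne : (j : ℕ) ≠ (i : ℕ) := fun h => hji (Fin.ext h)
    simp only [dface, fc, Fin.coe_castSucc, Fin.val_succ, hji, if_false]
    split_ifs <;> first | rfl | omega

lemma tail_eq_fc {m : ℕ} (y : Fin (m + 1) → G) : Fin.tail y = fc m 0 y := by
  funext j
  simp only [fc, Fin.tail]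
  rw [if_neg (by omega), if_neg (by omega)]

lemma init_eq_fc {m : ℕ} (y : Fin (m + 1) → G) : Fin.init y = fc m (m + 1) y := by
  funext j
  have := j.isLt
  simp only [fc, Fin.init]
  rw [if_pos (by omega)]

lemma cb_apply (m : ℕ) (w : (Fin m → G) → Aˣ) (y : Fin (m + 1) → G) :
    cb m w y =
      w (Fin.tail y) * (∏ i : Fin m, (w (dface i y)) ^ ((-1 : ℤ) ^ ((i : ℕ) + 1))) *
        (w (Fin.init y)) ^ ((-1 : ℤ) ^ (m + 1)) := by
  unfold cb
  rw [Finset.prod_range_succ, Finset.prod_range_succ']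
  have h1 : ∏ i : Fin m, (w (dface i y)) ^ ((-1 : ℤ) ^ ((i : ℕ) + 1))
      = ∏ k ∈ Finset.range m, (w (fc m (k + 1) y)) ^ ((-1 : ℤ) ^ (k + 1)) := by
    rw [← Fin.prod_univ_eq_prod_range (fun k => (w (fc m (k + 1) y)) ^ ((-1 : ℤ) ^ (k + 1)))]
    exact Finset.prod_congr rfl fun i _ => by rw [dface_eq_fc]
  rw [h1, tail_eq_fc, init_eq_fc, pow_zero, zpow_one]
  rw [mul_comm (∏ k ∈ Finset.range m, (w (fc m (k + 1) y)) ^ ((-1 : ℤ) ^ (k + 1)))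
    (w (fc m 0 y))]

lemma init_cons' {m : ℕ} (c : G) (x : Fin (m + 1) → G) :
    Fin.init (α := fun _ => G) (Fin.cons c x) = Fin.cons c (Fin.init x) := by
  funext j
  rcases Fin.eq_zero_or_eq_succ j with rfl | ⟨k, rfl⟩
  · simp [Fin.init]
  · simp only [Fin.init, Fin.cons_succ]
    rw [← Fin.succ_castSucc, Fin.cons_succ]

lemma dface0_cons {m : ℕ} (c : G) (x : Fin (m + 2) → G) :
    dface (0 : Fin (m + 2)) (Fin.cons c x) = Fin.cons (c * x 0) (Fin.tail x) := by
  funext j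
  rcases Fin.eq_zero_or_eq_succ j with rfl | ⟨k, rfl⟩
  · simp [dface]
  · simp only [dface, Fin.cons_succ]
    rw [if_neg (by simp), if_neg (Fin.succ_ne_zero k)]
    rfl

lemma cons_dface {m : ℕ} (c : G) (i : Fin (m + 1)) (x : Fin (m + 2) → G) :
    dface i.succ (Fin.cons c x) = Fin.cons c (dface i x) := by
  funext j
  rcases Fin.eq_zero_or_eq_succ j with rfl | ⟨k, rfl⟩
  · simp only [dface, Fin.cons_zero]
    rw [if_pos (by simp)]
    simp
  · simp only [dface, Fin.cons_succ, Fin.val_succ, Fin.succ_inj]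
    by_cases h1 : (k : ℕ) < (i : ℕ)
    · rw [if_pos (by omega), if_pos h1, ← Fin.succ_castSucc, Fin.cons_succ]
    · rw [if_neg (by omega), if_neg h1]
      by_cases h2 : k = i
      · rw [if_pos h2, if_pos h2, ← Fin.succ_castSucc, Fin.cons_succ]
      · rw [if_neg h2, if_neg h2]

lemma zp (a : Aˣ) (k : ℕ) : a ^ ((-1 : ℤ) ^ (k + 1)) = (a ^ ((-1 : ℤ) ^ k))⁻¹ := by
  rw [pow_succ, zpow_mul, zpow_neg_one]

end Aux

theorem stmt6 {G A : Type*} [Group G] [CommRing A] (n : ℕ)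
    (wt : (Fin (n + 1) → G) → Aˣ) :
    let u : (Fin (n + 1) → G) → G → Aˣ := fun x t =>
      let y : Fin (n + 2) → G := Fin.cons t⁻¹ x
      (wt (Fin.init y)) ^ ((-1 : ℤ) ^ (n + 1)) *
      wt (dface 0 y) *
      ∏ i : Fin n, (wt (dface i.succ y)) ^ ((-1 : ℤ) ^ ((i : ℕ) + 1))
    ∀ (x : Fin (n + 2) → G) (t : G),
      u (Fin.tail x) ((x 0)⁻¹ * t) *
      (∏ i : Fin (n + 1), (u (dface i x) t) ^ ((-1 : ℤ) ^ ((i : ℕ) + 1))) *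
      (u (Fin.init x) t) ^ ((-1 : ℤ) ^ (n + 2)) = 1 := by
  intro u x t
  have hu : ∀ (a : Fin (n + 1) → G) (s : G),
      u a s = wt a * (cb (n + 1) wt (Fin.cons s⁻¹ a))⁻¹ := by
    intro a s
    show (wt (Fin.init (α := fun _ => G) (Fin.cons s⁻¹ a))) ^ ((-1 : ℤ) ^ (n + 1)) *
      wt (dface 0 (Fin.cons s⁻¹ a)) *
      ∏ i : Fin n, (wt (dface i.succ (Fin.cons s⁻¹ a))) ^ ((-1 : ℤ) ^ ((i : ℕ) + 1)) = _
    rw [cb_apply, Fin.tail_cons, Fin.prod_univ_succ]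
    simp only [Fin.val_succ, Fin.val_zero, zero_add, pow_one, zp, Finset.prod_inv_distrib,
      zpow_neg_one, mul_inv, inv_inv]
    simp [mul_comm, mul_left_comm, mul_assoc]
  simp only [hu, mul_inv_rev, inv_inv]
  have key := cb_cb (n + 1) wt (Fin.cons t⁻¹ x)
  rw [cb_apply (n + 2) (cb (n + 1) wt) (Fin.cons t⁻¹ x), Fin.tail_cons,
      Fin.prod_univ_succ (fun i : Fin (n + 2) =>
        (cb (n + 1) wt (dface i (Fin.cons t⁻¹ x))) ^ ((-1 : ℤ) ^ ((i : ℕ) + 1))),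
      cb_apply (n + 1) wt x, dface0_cons, init_cons'] at key
  rw [← key]
  simp only [cons_dface, Fin.val_succ, Fin.val_zero, zero_add, pow_one, zpow_neg_one]
  have hzp : ∀ (a : Aˣ) (i : Fin (n + 1)),
      a ^ ((-1 : ℤ) ^ ((i : ℕ) + 1 + 1)) = (a ^ ((-1 : ℤ) ^ ((i : ℕ) + 1)))⁻¹ :=
    fun a i => zp a _
  simp only [hzp]
  simp only [show n + 1 + 1 = n + 2 from rfl]
  rw [zp (cb (n + 1) wt (Fin.cons t⁻¹ (Fin.init x))) (n + 2)]
  simp only [mul_zpow, inv_zpow, Finset.prod_mul_distrib, Finset.prod_inv_distrib]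
  generalize wt (Fin.tail x) = A1
  generalize cb (n + 1) wt (Fin.cons (t⁻¹ * x 0) (Fin.tail x)) = B1
  generalize (∏ x_1 : Fin (n + 1), wt (dface x_1 x) ^ ((-1 : ℤ) ^ ((x_1 : ℕ) + 1))) = A2
  generalize (∏ x_1 : Fin (n + 1),
    cb (n + 1) wt (Fin.cons t⁻¹ (dface x_1 x)) ^ ((-1 : ℤ) ^ ((x_1 : ℕ) + 1))) = B2
  generalize wt (Fin.init x) ^ ((-1 : ℤ) ^ (n + 2)) = A3
  generalize cb (n + 1) wt (Fin.cons t⁻¹ (Fin.init x)) ^ ((-1 : ℤ) ^ (n + 2)) = B3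
  simp [mul_comm, mul_left_comm, mul_assoc]
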